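/- Let n, v, d, k be natural numbers with d ≥ 1, 1 ≤ k, k ∣ n, k ∣ v, k ≤ v, and v + 1 ≤ n, and set x = v/n as a real number. Then (C(n/k, v/k) : ℝ) · C(n, v+1) · (v/n)^{d(v+1)} < c₆(x) · c₇(x)^n, where c₆(x) = e · x^{d−1} and c₇(x) = e^{(k+1)x/k} · x^{(dk−1−k)x/k} (real powers). -/

import Mathlib

open Real

private lemma aux_pow_fact (R : ℕ) : ((R : ℝ)) ^ R ≤ Real.exp R * (Nat.factorial R) := by
  have hf : (0:ℝ) < ((Nat.factorial R) : ℝ) := by positivity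
  have h2 : ((R:ℝ)) ^ R / ((Nat.factorial R) : ℝ) ≤ Real.exp R := by
    refine le_trans ?_ (Real.sum_le_exp_of_nonneg (by positivity) (R+1))
    exact Finset.single_le_sum (f := fun i => (R:ℝ)^i / (Nat.factorial i))
      (fun i _ => by positivity) (Finset.mem_range.mpr (Nat.lt_succ_self R))
  calc ((R:ℝ)) ^ R = ((R:ℝ)) ^ R / ((Nat.factorial R) : ℝ) * ((Nat.factorial R) : ℝ) := by field_simp
    _ ≤ Real.exp R * (Nat.factorial R) := by gcongr

private lemma aux_choose_le (N R : ℕ) (hR : 1 ≤ R) :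
    (N.choose R : ℝ) ≤ (Real.exp 1 * N / R) ^ R := by
  have hR0 : (0:ℝ) < (R:ℝ) := by exact_mod_cast hR
  have hf : (0:ℝ) < ((Nat.factorial R) : ℝ) := by positivity
  have h1 : (N.choose R : ℝ) ≤ (N:ℝ) ^ R / ((Nat.factorial R) : ℝ) := Nat.choose_le_pow_div R N
  refine h1.trans ?_
  have hrr : (0:ℝ) < (R:ℝ) ^ R := by positivity
  have key : (N:ℝ) ^ R / ((Nat.factorial R) : ℝ) ≤ Real.exp R * (N:ℝ) ^ R / (R:ℝ) ^ R := by
    rw [div_le_div_iff₀ hf hrr]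
    calc (N:ℝ) ^ R * (R:ℝ) ^ R ≤ (N:ℝ) ^ R * (Real.exp R * (Nat.factorial R)) := by
          gcongr
          exact aux_pow_fact R
      _ = Real.exp R * (N:ℝ) ^ R * ((Nat.factorial R) : ℝ) := by ring
  refine key.trans_eq ?_
  rw [div_pow, mul_pow, exp_one_pow]

/-- Union-bound estimate for the paged model in its worst case (page size equals
bucket size `k`): with `x = v/n`,
`C(n/k, v/k)·C(n, v+1)·(v/n)^{d(v+1)} < c₆(x)·c₇(x)^n` where `c₆(x) = e·x^{d−1}`
and `c₇(x) = e^{(k+1)x/k}·x^{(dk−1−k)x/k}` (real powers). -/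
theorem stmt_14 (n v d k : ℕ) (hd : 1 ≤ d) (hk : 1 ≤ k)
    (hkn : k ∣ n) (hkv : k ∣ v) (hkv' : k ≤ v) (hvn : v + 1 ≤ n) :
    ((n / k).choose (v / k) : ℝ) * (n.choose (v + 1) : ℝ) *
        ((v : ℝ) / n) ^ (d * (v + 1)) <
      (Real.exp 1 * ((v : ℝ) / n) ^ ((d : ℝ) - 1)) *
        (Real.exp ((((k : ℝ) + 1) * ((v : ℝ) / n)) / k) *
          ((v : ℝ) / n) ^
            ((((d : ℝ) * k - 1 - k) * ((v : ℝ) / n)) / k)) ^ n := by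
  have hv0 : 0 < v := hk.trans hkv'
  have hn0 : 0 < n := by omega
  have hvR : (0:ℝ) < v := by exact_mod_cast hv0
  have hnR : (0:ℝ) < n := by exact_mod_cast hn0
  have hkR : (0:ℝ) < k := by exact_mod_cast hk
  set x : ℝ := (v : ℝ) / n with hxdef
  have hx0 : 0 < x := by positivity
  have hnx : (n:ℝ) * x = v := by rw [hxdef]; field_simp
  have hvkR : ((v / k : ℕ) : ℝ) = (v:ℝ) / k := by
    rw [Nat.cast_div hkv (by positivity)]
  have hnkR : ((n / k : ℕ) : ℝ) = (n:ℝ) / k := by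
    rw [Nat.cast_div hkn (by positivity)]
  have hvk1 : 1 ≤ v / k := (Nat.one_le_div_iff hk).mpr hkv'
  -- bound 1
  have key1 : ((n / k).choose (v / k) : ℝ) ≤ (Real.exp 1 / x) ^ (v / k) := by
    refine (aux_choose_le (n / k) (v / k) hvk1).trans_eq ?_
    congr 1
    rw [hvkR, hnkR, hxdef]
    field_simp
  -- bound 2 (strict)
  have key2 : (n.choose (v + 1) : ℝ) < (Real.exp 1 / x) ^ (v + 1) := by
    refine (aux_choose_le n (v + 1) (by omega)).trans_lt ?_
    have hbase : Real.exp 1 * (n:ℝ) / ((v + 1 : ℕ) : ℝ) < Real.exp 1 / x := by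
      rw [hxdef, div_div_eq_mul_div]
      push_cast
      apply div_lt_div_of_pos_left (by positivity) hvR
      linarith
    exact pow_lt_pow_left₀ hbase (by positivity) (by omega)
  -- the RHS equals the product of the two bounds times x^(d(v+1))
  set a : ℝ := (((k : ℝ) + 1) * x) / k with ha
  set b : ℝ := (((d : ℝ) * k - 1 - k) * x) / k with hb
  have hRHS : (Real.exp 1 * x ^ ((d : ℝ) - 1)) * (Real.exp a * x ^ b) ^ n =
      (Real.exp 1 / x) ^ (v / k) * (Real.exp 1 / x) ^ (v + 1) * x ^ (d * (v + 1)) := by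
    have e2 : ∀ m : ℕ, (Real.exp 1 / x) ^ m = Real.exp m * x ^ (-(m:ℝ)) := by
      intro m
      rw [div_pow, exp_one_pow, Real.rpow_neg hx0.le, Real.rpow_natCast, div_eq_mul_inv]
    have lhs_eq : (Real.exp 1 * x ^ ((d : ℝ) - 1)) * (Real.exp a * x ^ b) ^ n =
        Real.exp (1 + a * n) * x ^ (((d:ℝ) - 1) + b * n) := by
      rw [mul_pow, ← Real.exp_nat_mul, ← Real.rpow_natCast (x ^ b) n,
        ← Real.rpow_mul hx0.le, Real.exp_add, Real.rpow_add hx0]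
      ring_nf
    have rhs_eq : (Real.exp 1 / x) ^ (v / k) * (Real.exp 1 / x) ^ (v + 1) * x ^ (d * (v + 1)) =
        Real.exp (((v / k : ℕ) : ℝ) + ((v + 1 : ℕ) : ℝ)) *
          x ^ ((-(((v / k : ℕ)) : ℝ)) + (-(((v + 1 : ℕ)) : ℝ)) + ((d * (v + 1) : ℕ) : ℝ)) := by
      rw [e2, e2, ← Real.rpow_natCast x (d * (v + 1)), Real.exp_add,
        Real.rpow_add hx0, Real.rpow_add hx0]
      ring
    have hS : 1 + a * n = ((v / k : ℕ) : ℝ) + ((v + 1 : ℕ) : ℝ) := by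
      rw [ha, hvkR]
      field_simp
      push_cast
      linear_combination ((k:ℝ) + 1) * hnx
    have hT : ((d:ℝ) - 1) + b * n =
        (-(((v / k : ℕ)) : ℝ)) + (-(((v + 1 : ℕ)) : ℝ)) + ((d * (v + 1) : ℕ) : ℝ) := by
      rw [hb, hvkR]
      push_cast
      field_simp
      linear_combination ((d:ℝ) * k - 1 - k) * hnx
    rw [lhs_eq, rhs_eq, hS, hT]
  rw [hRHS]
  have hpow : (0:ℝ) < x ^ (d * (v + 1)) := by positivity
  have hb1 : (0:ℝ) < (Real.exp 1 / x) ^ (v / k) := by positivity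
  calc ((n / k).choose (v / k) : ℝ) * (n.choose (v + 1) : ℝ) * x ^ (d * (v + 1))
      ≤ (Real.exp 1 / x) ^ (v / k) * (n.choose (v + 1) : ℝ) * x ^ (d * (v + 1)) := by
        gcongr
    _ < (Real.exp 1 / x) ^ (v / k) * (Real.exp 1 / x) ^ (v + 1) * x ^ (d * (v + 1)) := by
        apply mul_lt_mul_of_pos_right _ hpow
        exact mul_lt_mul_of_pos_left key2 hb1
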